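/- Let σ be an element of the Weyl group W of a root system with simple roots Δ, and s_i the simple reflection for α_i ∈ Δ. Write σ(ρ) − ρ = −Σ_j c_j α_j and s_i σ(ρ) − ρ = −Σ_j e_j α_j with c_j, e_j ≥ 0. If ℓ(s_i σ) > ℓ(σ), then e_j ≥ c_j for all j, and moreover e_i > c_i. -/

import Mathlib

/-- A (crystallographic, reduced) root system of rank `r`, presented concretely:
weights live in `Fin r → ℚ`, `Φ` is the finite set of roots, `α` is a base of
simple roots, and `pairing i` is the linear functional `⟨·, αᵢ∨⟩` given by the
coroot of the `i`-th simple root. -/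
structure RootSystemBase (r : ℕ) where
  /-- The finite set of roots. -/
  Φ : Finset (Fin r → ℚ)
  /-- The simple roots. -/
  α : Fin r → (Fin r → ℚ)
  /-- Pairing with the coroot of the `i`-th simple root. -/
  pairing : Fin r → ((Fin r → ℚ) →ₗ[ℚ] ℚ)
  α_mem : ∀ i, α i ∈ Φ
  indep : LinearIndependent ℚ α
  pairing_self : ∀ i, pairing i (α i) = 2
  pairing_int : ∀ i, ∀ β ∈ Φ, ∃ n : ℤ, pairing i β = n
  refl_mem : ∀ i, ∀ β ∈ Φ, β - pairing i β • α i ∈ Φ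
  pos_or_neg : ∀ β ∈ Φ,
    (∃ c : Fin r → ℕ, β = ∑ j, (c j : ℚ) • α j) ∨
    (∃ c : Fin r → ℕ, β = -∑ j, (c j : ℚ) • α j)
  zero_not_mem : (0 : Fin r → ℚ) ∉ Φ

namespace RootSystemBase

variable {r : ℕ} (R : RootSystemBase r)

/-- The simple reflection corresponding to the `i`-th simple root, as a function. -/
def sfun (i : Fin r) (v : Fin r → ℚ) : Fin r → ℚ := v - R.pairing i v • R.α i

lemma sfun_involutive (i : Fin r) : Function.Involutive (R.sfun i) := by
  intro v
  have h : R.pairing i (R.sfun i v) = -R.pairing i v := by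
    simp [sfun, map_sub, map_smul, R.pairing_self, smul_eq_mul]
    ring
  show R.sfun i (R.sfun i v) = v
  rw [sfun, h]
  rw [sfun]
  module

/-- The simple reflection corresponding to the `i`-th simple root. -/
def s (i : Fin r) : Equiv.Perm (Fin r → ℚ) := (R.sfun_involutive i).toPerm

/-- The Weyl group, generated by the simple reflections. -/
def W : Subgroup (Equiv.Perm (Fin r → ℚ)) := Subgroup.closure (Set.range R.s)

/-- A weight is "positive" when it is a nonnegative integral combination of the
simple roots. -/
def IsPos (β : Fin r → ℚ) : Prop := ∃ c : Fin r → ℕ, β = ∑ j, (c j : ℚ) • R.α j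

open Classical in
/-- The finite set of positive roots. -/
noncomputable def posFinset : Finset (Fin r → ℚ) := R.Φ.filter R.IsPos

/-- `ρ`, the half-sum of the positive roots. -/
noncomputable def ρ : Fin r → ℚ := (1 / 2 : ℚ) • ∑ β ∈ R.posFinset, β

open Classical in
/-- The length of a Weyl group element: the number of positive roots sent to
nonpositive weights (i.e. to negative roots, for elements of the Weyl group). -/
noncomputable def len (σ : Equiv.Perm (Fin r → ℚ)) : ℕ :=
  (R.posFinset.filter fun β => ¬ R.IsPos (σ β)).card

/-- Kostant's partition function: the number of ways of writing `ξ` as a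
nonnegative integral combination of positive roots. -/
noncomputable def kostant (ξ : Fin r → ℚ) : ℕ :=
  Set.ncard {f : R.posFinset → ℕ |
    ∑ β : R.posFinset, (f β : ℚ) • (β : Fin r → ℚ) = ξ}

/-- The coefficient of `q^k` in the `q`-analog `℘_q(ξ)` of Kostant's partition
function: the number of ways of writing `ξ` as a nonnegative integral combination
of exactly `k` positive roots counted with multiplicity. -/
noncomputable def kostantCount (k : ℕ) (ξ : Fin r → ℚ) : ℕ :=
  Set.ncard {f : R.posFinset → ℕ |
    (∑ β : R.posFinset, (f β : ℚ) • (β : Fin r → ℚ) = ξ) ∧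
    ∑ β : R.posFinset, f β = k}

end RootSystemBase

namespace RootSystemBase

variable {r : ℕ} (R : RootSystemBase r)

lemma s_apply (i : Fin r) (v : Fin r → ℚ) :
    R.s i v = v - R.pairing i v • R.α i := rfl

lemma s_add (i : Fin r) (a b : Fin r → ℚ) : R.s i (a + b) = R.s i a + R.s i b := by
  simp only [s_apply, map_add]
  module

lemma s_smul (i : Fin r) (q : ℚ) (a : Fin r → ℚ) : R.s i (q • a) = q • R.s i a := by
  simp only [s_apply, map_smul, smul_eq_mul]
  module

lemma coeff_eq_zero (g : Fin r → ℚ) (h : ∑ j, g j • R.α j = 0) : ∀ j, g j = 0 := by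
  have := linearIndependent_iff'.mp R.indep Finset.univ g (by simpa using h)
  intro j; exact this j (Finset.mem_univ j)

lemma not_isPos_neg_of_isPos {β : Fin r → ℚ} (hβ : β ∈ R.Φ) (h : R.IsPos β) :
    ¬ R.IsPos (-β) := by
  rintro ⟨d, hd⟩
  obtain ⟨c, hc⟩ := h
  have h0 : ∑ j, ((c j : ℚ) + (d j : ℚ)) • R.α j = 0 := by
    have h1 : (∑ j, (c j : ℚ) • R.α j) + ∑ j, (d j : ℚ) • R.α j = 0 := by
      rw [← hc, ← hd]; ring
    rw [← h1, ← Finset.sum_add_distrib]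
    exact Finset.sum_congr rfl fun j _ => add_smul _ _ _
  have hz := R.coeff_eq_zero _ h0
  have hb0 : β = 0 := by
    rw [hc]
    apply Finset.sum_eq_zero
    intro j _
    have h2 := hz j
    have hcj : (c j : ℚ) = 0 := by
      have := Nat.cast_nonneg (α := ℚ) (c j)
      have := Nat.cast_nonneg (α := ℚ) (d j)
      linarith
    rw [hcj, zero_smul]
  rw [hb0] at hβ
  exact R.zero_not_mem hβ

lemma isPos_neg_of_not_isPos {β : Fin r → ℚ} (hβ : β ∈ R.Φ) (h : ¬ R.IsPos β) :
    R.IsPos (-β) := by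
  rcases R.pos_or_neg β hβ with h1 | h1
  · exact absurd ⟨h1.choose, h1.choose_spec⟩ h
  · obtain ⟨c, hc⟩ := h1
    exact ⟨c, by rw [hc]; ring⟩

lemma mem_posFinset {β : Fin r → ℚ} : β ∈ R.posFinset ↔ β ∈ R.Φ ∧ R.IsPos β := by
  classical
  rw [posFinset]
  convert Finset.mem_filter using 2

end RootSystemBase
namespace RootSystemBase

variable {r : ℕ} (R : RootSystemBase r)

lemma alpha_mem_pos (i : Fin r) : R.α i ∈ R.posFinset := by
  rw [mem_posFinset]
  refine ⟨R.α_mem i, fun j => if j = i then 1 else 0, ?_⟩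
  classical
  have h1 : ∀ j : Fin r, ((if j = i then (1:ℕ) else 0 : ℕ) : ℚ) • R.α j
      = if j = i then R.α j else 0 := fun j => by split_ifs <;> simp
  rw [Finset.sum_congr rfl fun j _ => h1 j]
  simp [Finset.sum_ite_eq']

lemma isPos_ray_coeff {i : Fin r} {β : Fin r → ℚ} (hβ : β ∈ R.posFinset)
    (hne : ∀ j, j ≠ i → True) : True := trivial

lemma s_s (i : Fin r) (v : Fin r → ℚ) : R.s i (R.s i v) = v :=
  R.sfun_involutive i v

lemma s_mem_pos (i : Fin r) {β : Fin r → ℚ} (hβ : β ∈ R.posFinset)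
    (hray : ∀ q : ℚ, 0 < q → β ≠ q • R.α i) : R.s i β ∈ R.posFinset := by
  classical
  obtain ⟨hΦ, c, hc⟩ := R.mem_posFinset.mp hβ
  have hsΦ : R.s i β ∈ R.Φ := R.refl_mem i β hΦ
  rw [R.mem_posFinset]
  refine ⟨hsΦ, ?_⟩
  by_contra hneg
  obtain ⟨d, hd⟩ := R.isPos_neg_of_not_isPos hsΦ hneg
  set p := R.pairing i β with hp
  have hite : ∑ j, (if j = i then p else 0) • R.α j = p • R.α i := by
    have h1 : ∀ j : Fin r, (if j = i then p else 0) • R.α j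
        = if j = i then p • R.α j else 0 := fun j => by split_ifs <;> simp
    rw [Finset.sum_congr rfl fun j _ => h1 j]
    simp [Finset.sum_ite_eq']
  have key : ∑ j, ((c j : ℚ) + (d j : ℚ) - (if j = i then p else 0)) • R.α j = 0 := by
    have hsum : ∑ j, ((c j : ℚ) + (d j : ℚ) - (if j = i then p else 0)) • R.α j
        = (∑ j, (c j : ℚ) • R.α j) + (∑ j, (d j : ℚ) • R.α j)
          - ∑ j, (if j = i then p else 0) • R.α j := by
      simp only [sub_smul, add_smul, Finset.sum_sub_distrib, Finset.sum_add_distrib]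
    have hd' : (∑ j, (d j : ℚ) • R.α j) = -(β - p • R.α i) := by
      rw [← hd]; rfl
    rw [hsum, hite, ← hc, hd']
    abel
  have hz := R.coeff_eq_zero _ key
  have hcj : ∀ j, j ≠ i → (c j : ℚ) = 0 := by
    intro j hj
    have := hz j
    rw [if_neg hj] at this
    have := Nat.cast_nonneg (α := ℚ) (c j)
    have := Nat.cast_nonneg (α := ℚ) (d j)
    linarith [hz j, if_neg hj ▸ hz j]
  have hβeq : β = (c i : ℚ) • R.α i := by
    rw [hc, Finset.sum_eq_single i (fun j _ hj => by rw [hcj j hj, zero_smul])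
      (fun h => absurd (Finset.mem_univ i) h)]
  have hci : 0 < (c i : ℚ) := by
    rcases Nat.eq_zero_or_pos (c i) with h | h
    · exfalso
      rw [h] at hβeq
      simp only [Nat.cast_zero, zero_smul] at hβeq
      rw [hβeq] at hΦ
      exact R.zero_not_mem hΦ
    · exact_mod_cast h
  exact hray _ hci hβeq

lemma pos_coeff_ray (i : Fin r) {β : Fin r → ℚ} (hβ : β ∈ R.posFinset) {q : ℚ}
    (heq : β = q • R.α i) : 0 < q := by
  classical
  obtain ⟨hΦ, c, hc⟩ := R.mem_posFinset.mp hβ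
  have h1 : ∀ j : Fin r, (if j = i then q else 0) • R.α j
      = if j = i then q • R.α j else 0 := fun j => by split_ifs <;> simp
  have hite : ∑ j, (if j = i then q else 0) • R.α j = q • R.α i := by
    rw [Finset.sum_congr rfl fun j _ => h1 j]; simp [Finset.sum_ite_eq']
  have key : ∑ j, ((c j : ℚ) - (if j = i then q else 0)) • R.α j = 0 := by
    have hsum : ∑ j, ((c j : ℚ) - (if j = i then q else 0)) • R.α j
        = (∑ j, (c j : ℚ) • R.α j) - ∑ j, (if j = i then q else 0) • R.α j := by
      simp only [sub_smul, Finset.sum_sub_distrib]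
    rw [hsum, hite, ← hc, heq]; abel
  have hz := R.coeff_eq_zero _ key
  have hq1 := hz i
  rw [if_pos rfl] at hq1
  have hq0 : q = (c i : ℚ) := by linarith
  rcases Nat.eq_zero_or_pos (c i) with h | h
  · exfalso
    have hb : β = 0 := by rw [heq, hq0, h]; simp
    rw [hb] at hΦ; exact R.zero_not_mem hΦ
  · rw [hq0]; exact_mod_cast h

lemma s_not_mem_pos_ray (i : Fin r) {β : Fin r → ℚ} (hβ : β ∈ R.posFinset)
    {q : ℚ} (hq : 0 < q) (heq : β = q • R.α i) : ¬ R.IsPos (R.s i β) := by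
  obtain ⟨hΦ, hpos⟩ := R.mem_posFinset.mp hβ
  have hs : R.s i β = -β := by
    rw [s_apply, heq, map_smul, R.pairing_self]
    simp only [smul_eq_mul]
    module
  rw [hs]
  exact R.not_isPos_neg_of_isPos hΦ hpos

lemma pairing_rho_pos (i : Fin r) : 0 < R.pairing i R.ρ := by
  classical
  have hρ : R.pairing i R.ρ = (1/2 : ℚ) * ∑ β ∈ R.posFinset, R.pairing i β := by
    rw [ρ, map_smul, smul_eq_mul, map_sum]
  set Ray : (Fin r → ℚ) → Prop := fun β => ∃ q : ℚ, 0 < q ∧ β = q • R.α i with hRay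
  have hsplit : R.posFinset = (R.posFinset.filter Ray) ∪ (R.posFinset.filter (fun β => ¬ Ray β)) :=
    (Finset.filter_union_filter_not_eq _ _).symm
  have hzero : ∑ β ∈ R.posFinset.filter (fun β => ¬ Ray β), R.pairing i β = 0 := by
    apply Finset.sum_involution (fun β _ => R.s i β)
    · intro β hβ
      have : R.pairing i (R.s i β) = - R.pairing i β := by
        rw [s_apply, map_sub, map_smul, R.pairing_self]
        simp only [smul_eq_mul]; ring
      rw [this]; ring
    · intro β hβ hne heq
      apply hne
      have h0 : R.pairing i β • R.α i = 0 := by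
        have h2 : β - R.pairing i β • R.α i = β := heq
        exact sub_eq_self.mp h2
      have hα : R.α i ≠ 0 := fun h => R.zero_not_mem (h ▸ R.α_mem i)
      rcases smul_eq_zero.mp h0 with h | h
      · exact h
      · exact absurd h hα
    · intro β hβ
      rw [Finset.mem_filter] at hβ ⊢
      obtain ⟨hβp, hβr⟩ := hβ
      have hsp : R.s i β ∈ R.posFinset := by
        apply R.s_mem_pos i hβp
        intro q hq heq
        exact hβr ⟨q, hq, heq⟩
      refine ⟨hsp, ?_⟩
      rintro ⟨q, hq, heq⟩
      apply hβr
      exfalso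
      have h2 := congrArg (R.s i) heq
      rw [R.s_s] at h2
      have h3 : β = (-q) • R.α i := by
        rw [h2, s_smul, s_apply, R.pairing_self]
        module
      have := R.pos_coeff_ray i hβp h3
      linarith
    · intro β hβ
      exact R.sfun_involutive i β
  have hpos : 0 < ∑ β ∈ R.posFinset.filter Ray, R.pairing i β := by
    apply Finset.sum_pos
    · rintro β hβ
      rw [Finset.mem_filter] at hβ
      obtain ⟨_, q, hq, heq⟩ := hβ
      rw [heq, map_smul, R.pairing_self, smul_eq_mul]
      linarith
    · exact ⟨R.α i, Finset.mem_filter.mpr ⟨R.alpha_mem_pos i, 1, one_pos, (one_smul _ _).symm⟩⟩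
  rw [hρ, hsplit, Finset.sum_union (Finset.disjoint_filter_filter_not _ _ _), hzero, add_zero]
  linarith

end RootSystemBase
namespace RootSystemBase

variable {r : ℕ} (R : RootSystemBase r)

/-- The closure-induction package: elements of `W` are linear and stabilize `Φ`. -/
def GoodPerm (σ : Equiv.Perm (Fin r → ℚ)) : Prop :=
  (∀ a b, σ (a + b) = σ a + σ b) ∧ (∀ (q : ℚ) a, σ (q • a) = q • σ a) ∧
  (∀ β ∈ R.Φ, σ β ∈ R.Φ) ∧ (∀ β ∈ R.Φ, σ⁻¹ β ∈ R.Φ)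

lemma s_inv (i : Fin r) : (R.s i)⁻¹ = R.s i := by
  apply Equiv.ext
  intro v
  have := R.s_s i v
  calc (R.s i)⁻¹ v = (R.s i)⁻¹ (R.s i (R.s i v)) := by rw [this]
  _ = R.s i v := (R.s i).symm_apply_apply _

lemma goodPerm_of_mem {σ : Equiv.Perm (Fin r → ℚ)} (hσ : σ ∈ R.W) : R.GoodPerm σ := by
  induction hσ using Subgroup.closure_induction with
  | mem x hx =>
    obtain ⟨i, rfl⟩ := hx
    refine ⟨R.s_add i, R.s_smul i, fun β hβ => R.refl_mem i β hβ, fun β hβ => ?_⟩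
    rw [R.s_inv i]
    exact R.refl_mem i β hβ
  | one => exact ⟨fun a b => rfl, fun q a => rfl, fun β hβ => hβ, fun β hβ => hβ⟩
  | mul x y hx hy px py =>
    obtain ⟨pxa, pxs, pxm, pxi⟩ := px
    obtain ⟨pya, pys, pym, pyi⟩ := py
    refine ⟨fun a b => ?_, fun q a => ?_, fun β hβ => ?_, fun β hβ => ?_⟩
    · simp only [Equiv.Perm.mul_apply, pya, pxa]
    · simp only [Equiv.Perm.mul_apply, pys, pxs]
    · exact pxm _ (pym _ hβ)
    · rw [mul_inv_rev]
      exact pyi _ (pxi _ hβ)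
  | inv x hx px =>
    obtain ⟨pxa, pxs, pxm, pxi⟩ := px
    refine ⟨fun a b => ?_, fun q a => ?_, fun β hβ => pxi β hβ, fun β hβ => ?_⟩
    · apply x.injective
      rw [pxa, show ∀ y, x (x⁻¹ y) = y from fun y => x.apply_symm_apply y,
        show ∀ y, x (x⁻¹ y) = y from fun y => x.apply_symm_apply y,
        show ∀ y, x (x⁻¹ y) = y from fun y => x.apply_symm_apply y]
    · apply x.injective
      rw [pxs, show ∀ y, x (x⁻¹ y) = y from fun y => x.apply_symm_apply y,
        show ∀ y, x (x⁻¹ y) = y from fun y => x.apply_symm_apply y]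
    · rw [inv_inv]
      exact pxm β hβ

lemma W_linear_comb {σ : Equiv.Perm (Fin r → ℚ)} (hσ : σ ∈ R.W) (g : Fin r → ℚ)
    (v : Fin r → ℚ) (hv : v = ∑ j, g j • R.α j) : σ v = ∑ j, g j • σ (R.α j) := by
  obtain ⟨ha, hs, _, _⟩ := R.goodPerm_of_mem hσ
  subst hv
  induction (Finset.univ : Finset (Fin r)) using Finset.induction with
  | empty =>
    simp only [Finset.sum_empty]
    have h0 : σ 0 = 0 := by
      have := ha 0 0
      simp only [add_zero] at this
      exact left_eq_add.mp this
    exact h0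
  | insert _ _ hni ih =>
    rw [Finset.sum_insert hni, Finset.sum_insert hni, ha, hs, ih]

end RootSystemBase
namespace RootSystemBase

variable {r : ℕ} (R : RootSystemBase r)

noncomputable def αBasis [Nonempty (Fin r)] : Module.Basis (Fin r) ℚ (Fin r → ℚ) :=
  basisOfLinearIndependentOfCardEqFinrank R.indep (by simp)

lemma exists_comb [Nonempty (Fin r)] (v : Fin r → ℚ) :
    ∃ g : Fin r → ℚ, v = ∑ j, g j • R.α j := by
  refine ⟨fun j => R.αBasis.repr v j, ?_⟩
  have hb : ∀ j, R.αBasis j = R.α j := fun j => by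
    rw [αBasis, coe_basisOfLinearIndependentOfCardEqFinrank]
  calc v = ∑ j, R.αBasis.repr v j • R.αBasis j := (R.αBasis.sum_repr v).symm
  _ = ∑ j, R.αBasis.repr v j • R.α j := Finset.sum_congr rfl fun j _ => by rw [hb j]

lemma finite_W [Nonempty (Fin r)] : (R.W : Set (Equiv.Perm (Fin r → ℚ))).Finite := by
  haveI : Finite ↥R.W := by
    apply Finite.of_injective
      (f := fun (σ : ↥R.W) (j : Fin r) =>
        (⟨σ.1 (R.α j), (R.goodPerm_of_mem σ.2).2.2.1 _ (R.α_mem j)⟩ : {x // x ∈ R.Φ}))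
    intro σ τ h
    have hval : ∀ j, σ.1 (R.α j) = τ.1 (R.α j) := by
      intro j
      exact congrArg Subtype.val (congrFun h j)
    apply Subtype.ext
    apply Equiv.ext
    intro v
    obtain ⟨g, hg⟩ := R.exists_comb v
    rw [R.W_linear_comb σ.2 g v hg, R.W_linear_comb τ.2 g v hg]
    exact Finset.sum_congr rfl fun j _ => by rw [hval j]
  exact Set.toFinite _

noncomputable def Wfin [Nonempty (Fin r)] : Finset (Equiv.Perm (Fin r → ℚ)) :=
  R.finite_W.toFinset

lemma mem_Wfin [Nonempty (Fin r)] {σ : Equiv.Perm (Fin r → ℚ)} :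
    σ ∈ R.Wfin ↔ σ ∈ R.W := Set.Finite.mem_toFinset _

/-- A `W`-invariant bilinear form. -/
noncomputable def B [Nonempty (Fin r)] (v w : Fin r → ℚ) : ℚ :=
  ∑ τ ∈ R.Wfin, ∑ j, R.pairing j (τ v) * R.pairing j (τ w)

variable [Nonempty (Fin r)]

lemma B_symm (v w : Fin r → ℚ) : R.B v w = R.B w v := by
  unfold B
  exact Finset.sum_congr rfl fun τ _ => Finset.sum_congr rfl fun j _ => mul_comm _ _

lemma B_add_right (v a b : Fin r → ℚ) : R.B v (a + b) = R.B v a + R.B v b := by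
  unfold B
  rw [← Finset.sum_add_distrib]
  refine Finset.sum_congr rfl fun τ hτ => ?_
  rw [← Finset.sum_add_distrib]
  refine Finset.sum_congr rfl fun j _ => ?_
  rw [(R.goodPerm_of_mem (R.mem_Wfin.mp hτ)).1 a b, map_add]
  ring

lemma B_smul_right (v : Fin r → ℚ) (q : ℚ) (a : Fin r → ℚ) :
    R.B v (q • a) = q * R.B v a := by
  unfold B
  rw [Finset.mul_sum]
  refine Finset.sum_congr rfl fun τ hτ => ?_
  rw [Finset.mul_sum]
  refine Finset.sum_congr rfl fun j _ => ?_
  rw [(R.goodPerm_of_mem (R.mem_Wfin.mp hτ)).2.1 q a, map_smul, smul_eq_mul]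
  ring

lemma B_sum_right (v : Fin r → ℚ) (g : Fin r → ℚ) :
    R.B v (∑ j, g j • R.α j) = ∑ j, g j * R.B v (R.α j) := by
  classical
  induction (Finset.univ : Finset (Fin r)) using Finset.induction with
  | empty =>
    simp only [Finset.sum_empty]
    have : R.B v 0 = R.B v ((0:ℚ) • 0) := by norm_num
    rw [this, B_smul_right]; ring
  | insert _ _ hni ih =>
    rw [Finset.sum_insert hni, Finset.sum_insert hni, B_add_right, B_smul_right, ih]

lemma B_invariant {σ : Equiv.Perm (Fin r → ℚ)} (hσ : σ ∈ R.W) (v w : Fin r → ℚ) :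
    R.B (σ v) (σ w) = R.B v w := by
  unfold B
  refine Finset.sum_nbij' (fun τ => τ * σ) (fun τ => τ * σ⁻¹) ?_ ?_ ?_ ?_ ?_
  · intro τ hτ
    rw [mem_Wfin] at hτ ⊢
    exact R.W.mul_mem hτ hσ
  · intro τ hτ
    rw [mem_Wfin] at hτ ⊢
    exact R.W.mul_mem hτ (R.W.inv_mem hσ)
  · intro τ _
    group
  · intro τ _
    group
  · intro τ _
    refine Finset.sum_congr rfl fun j _ => ?_
    rw [Equiv.Perm.mul_apply, Equiv.Perm.mul_apply]

lemma s_mem_W (i : Fin r) : R.s i ∈ R.W :=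
  Subgroup.subset_closure ⟨i, rfl⟩

lemma B_self_pos (i : Fin r) : 0 < R.B (R.α i) (R.α i) := by
  have h1 : (4:ℚ) ≤ ∑ j, R.pairing j (R.α i) * R.pairing j (R.α i) := by
    have h0 : R.pairing i (R.α i) * R.pairing i (R.α i)
        ≤ ∑ j, R.pairing j (R.α i) * R.pairing j (R.α i) :=
      Finset.single_le_sum (f := fun j => R.pairing j (R.α i) * R.pairing j (R.α i))
        (fun j _ => mul_self_nonneg _) (Finset.mem_univ i)
    rw [R.pairing_self i] at h0
    linarith
  have h2 : (4:ℚ) ≤ R.B (R.α i) (R.α i) := by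
    unfold B
    have hone : (1 : Equiv.Perm (Fin r → ℚ)) ∈ R.Wfin := R.mem_Wfin.mpr R.W.one_mem
    have := Finset.single_le_sum
      (f := fun τ => ∑ j, R.pairing j (τ (R.α i)) * R.pairing j (τ (R.α i)))
      (fun τ _ => Finset.sum_nonneg fun j _ => mul_self_nonneg _) hone
    simpa using le_trans h1 this
  linarith

lemma s_alpha (i : Fin r) : R.s i (R.α i) = -R.α i := by
  rw [s_apply, R.pairing_self]
  module

lemma pairing_eq_B (i : Fin r) (v : Fin r → ℚ) :
    2 * R.B v (R.α i) = R.pairing i v * R.B (R.α i) (R.α i) := by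
  have hinv := R.B_invariant (R.s_mem_W i) v (R.α i)
  rw [R.s_alpha i] at hinv
  have hsv : R.s i v = v + (-(R.pairing i v)) • R.α i := by
    rw [s_apply]; module
  have hneg : ∀ w u : Fin r → ℚ, R.B w (-u) = -R.B w u := by
    intro w u
    have : (-u) = (-1 : ℚ) • u := by module
    rw [this, B_smul_right]; ring
  rw [hneg] at hinv
  have hBv : R.B (R.s i v) (R.α i) = R.B v (R.α i)
      - R.pairing i v * R.B (R.α i) (R.α i) := by
    rw [B_symm, hsv, B_add_right, B_smul_right, B_symm R (R.α i) v]
    ring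
  rw [hBv] at hinv
  linarith

lemma B_rho_pos {β : Fin r → ℚ} (hβ : β ∈ R.posFinset) : 0 < R.B R.ρ β := by
  obtain ⟨hΦ, c, hc⟩ := R.mem_posFinset.mp hβ
  rw [hc, B_sum_right]
  have hterm : ∀ j, 0 < R.B R.ρ (R.α j) := by
    intro j
    have h1 := R.pairing_eq_B j R.ρ
    have h2 := R.B_self_pos j
    have h3 := R.pairing_rho_pos j
    nlinarith
  apply Finset.sum_pos'
  · intro j _
    have := hterm j
    positivity
  · have hex : ∃ j, c j ≠ 0 := by
      by_contra hall
      push_neg at hall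
      have : β = 0 := by
        rw [hc]
        apply Finset.sum_eq_zero
        intro j _
        rw [hall j]
        simp
      rw [this] at hΦ
      exact R.zero_not_mem hΦ
    obtain ⟨j, hj⟩ := hex
    refine ⟨j, Finset.mem_univ j, ?_⟩
    have : 0 < (c j : ℚ) := by exact_mod_cast Nat.pos_of_ne_zero hj
    have := hterm j
    positivity

end RootSystemBase
namespace RootSystemBase

variable {r : ℕ} (R : RootSystemBase r)

lemma sum_ite_single (i : Fin r) (t : ℚ) :
    ∑ j, (if j = i then t else 0) • R.α j = t • R.α i := by
  classical
  have h1 : ∀ j : Fin r, (if j = i then t else 0) • R.α j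
      = if j = i then t • R.α j else 0 := fun j => by split_ifs <;> simp
  rw [Finset.sum_congr rfl fun j _ => h1 j]
  simp [Finset.sum_ite_eq']

lemma exists_pos_to_ray {σ : Equiv.Perm (Fin r → ℚ)} (hσ : σ ∈ R.W) (i : Fin r)
    (hlen : R.len σ < R.len (R.s i * σ)) :
    ∃ β ∈ R.posFinset, ∃ q : ℚ, 0 < q ∧ σ β = q • R.α i := by
  classical
  by_contra hcon
  push_neg at hcon
  have hle : R.len (R.s i * σ) ≤ R.len σ := by
    unfold len
    apply Finset.card_le_card
    intro β hβ
    rw [Finset.mem_filter] at hβ ⊢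
    refine ⟨hβ.1, fun hpos => hβ.2 ?_⟩
    have hσβΦ : σ β ∈ R.Φ :=
      (R.goodPerm_of_mem hσ).2.2.1 β (R.mem_posFinset.mp hβ.1).1
    have hσβpos : σ β ∈ R.posFinset := R.mem_posFinset.mpr ⟨hσβΦ, hpos⟩
    have hray : ∀ q : ℚ, 0 < q → σ β ≠ q • R.α i := by
      intro q hq heq
      exact hcon β hβ.1 q hq heq
    have := R.s_mem_pos i hσβpos hray
    have hmul : (R.s i * σ) β = R.s i (σ β) := rfl
    rw [hmul]
    exact (R.mem_posFinset.mp this).2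
  omega

end RootSystemBase


open RootSystemBase in
/-- Let σ be an element of the Weyl group W of a root system with simple roots
α_1, …, α_r, and s_i the simple reflection for α_i.  Write σ(ρ) − ρ = −Σ_j c_j α_j
and s_iσ(ρ) − ρ = −Σ_j e_j α_j with c_j, e_j ≥ 0.  If ℓ(s_i σ) > ℓ(σ), then
e_j ≥ c_j for all j, and moreover e_i > c_i. -/
theorem weyl_length_increase_left {r : ℕ} (R : RootSystemBase r)
    (σ : Equiv.Perm (Fin r → ℚ)) (hσ : σ ∈ R.W) (i : Fin r)
    (c e : Fin r → ℚ)
    (hc : σ R.ρ - R.ρ = -∑ j, c j • R.α j) (hc0 : ∀ j, 0 ≤ c j)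
    (he : (R.s i * σ) R.ρ - R.ρ = -∑ j, e j • R.α j) (he0 : ∀ j, 0 ≤ e j)
    (hlen : R.len σ < R.len (R.s i * σ)) :
    (∀ j, c j ≤ e j) ∧ c i < e i := by
  classical
  haveI : Nonempty (Fin r) := ⟨i⟩
  set t := R.pairing i (σ R.ρ) with ht
  have hse : (R.s i * σ) R.ρ = σ R.ρ - t • R.α i := rfl
  have h2 : ∑ j, e j • R.α j = R.ρ - (R.s i * σ) R.ρ := by
    have h := he
    rw [sub_eq_iff_eq_add] at h
    rw [h]; abel
  have h3 : ∑ j, c j • R.α j = R.ρ - σ R.ρ := by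
    have h := hc
    rw [sub_eq_iff_eq_add] at h
    rw [h]; abel
  have key : ∑ j, (e j - c j - (if j = i then t else 0)) • R.α j = 0 := by
    have h1 : ∑ j, (e j - c j - (if j = i then t else 0)) • R.α j
        = (∑ j, e j • R.α j) - (∑ j, c j • R.α j)
          - ∑ j, (if j = i then t else 0) • R.α j := by
      simp only [sub_smul, Finset.sum_sub_distrib]
    rw [h1, R.sum_ite_single, h2, h3, hse]
    abel
  have hz := R.coeff_eq_zero _ key
  have htpos : 0 < t := by
    obtain ⟨β, hβ, q, hq, hray⟩ := R.exists_pos_to_ray hσ i hlen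
    have hαeq : σ (q⁻¹ • β) = R.α i := by
      rw [(R.goodPerm_of_mem hσ).2.1 q⁻¹ β, hray]
      rw [smul_smul, inv_mul_cancel₀ (ne_of_gt hq), one_smul]
    have hBinv : R.B (σ R.ρ) (R.α i) = q⁻¹ * R.B R.ρ β := by
      rw [← hαeq, R.B_invariant hσ, R.B_smul_right]
    have hpB := R.pairing_eq_B i (σ R.ρ)
    have hBself := R.B_self_pos i
    have hBρβ := R.B_rho_pos hβ
    rw [hBinv] at hpB
    have hqi : 0 < q⁻¹ := by positivity
    nlinarith
  constructor
  · intro j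
    have := hz j
    by_cases hji : j = i
    · rw [if_pos hji] at this
      subst hji
      linarith
    · rw [if_neg hji] at this
      linarith
  · have := hz i
    rw [if_pos rfl] at this
    linarith
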